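/- Let p, r be indeterminates, W = 16(p^2+4)r^3 + 4(p^2+4)r^2 - 4(19p+41)r - 16p - 199, and let Q_0 = (4r(p^2+4)W, 2(p^2+4)W^2) on the elliptic curve E_{p,r} : y^2 = x^3 + (p^2+4)Wx^2 - 4(19p+41)(p^2+4)W^2x - 4(p^2+4)^2(16p+199)W^3 over Q(p,r). Then the x-coordinate of [2]Q_0 equals 16(p^2+4)^2 r^4 + 8(p^2+4)(19p+41) r^2 + 4(32p^3 + 398p^2 + 128p + 1592) r + 16p^3 + 560p^2 + 1622p + 2477. -/

import Mathlib

open WeierstrassCurve.Affine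

/-- The field `ℚ(p, r)` realized as `RatFunc (RatFunc ℚ)`,
with `p` the inner variable and `r` the outer variable. -/
noncomputable abbrev Kpr : Type := RatFunc (RatFunc ℚ)

instance : CharZero (RatFunc ℚ) := charZero_of_injective_algebraMap (RatFunc.algebraMap_injective ℚ)
instance : CharZero Kpr := charZero_of_injective_algebraMap (RatFunc.algebraMap_injective (RatFunc ℚ))


noncomputable def pv : Kpr := RatFunc.C RatFunc.X

noncomputable def rv : Kpr := RatFunc.X

/-- `W = 16(p²+4)r³ + 4(p²+4)r² - 4(19p+41)r - 16p - 199`. -/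
noncomputable def Wv : Kpr :=
  16 * (pv ^ 2 + 4) * rv ^ 3 + 4 * (pv ^ 2 + 4) * rv ^ 2 - 4 * (19 * pv + 41) * rv -
    16 * pv - 199

/-- The curve `E_{p,r} : y² = x³ + (p²+4)Wx² - 4(19p+41)(p²+4)W²x - 4(p²+4)²(16p+199)W³`. -/
noncomputable def Epr : WeierstrassCurve.Affine Kpr :=
  { a₁ := 0, a₂ := (pv ^ 2 + 4) * Wv, a₃ := 0,
    a₄ := -4 * (19 * pv + 41) * (pv ^ 2 + 4) * Wv ^ 2,
    a₆ := -4 * (pv ^ 2 + 4) ^ 2 * (16 * pv + 199) * Wv ^ 3 }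

lemma p4_ne_zero : pv ^ 2 + 4 ≠ 0 := by
  have : pv ^ 2 + 4 = RatFunc.C (RatFunc.X ^ 2 + 4 : RatFunc ℚ) := by
    simp [pv, map_add, map_pow, map_ofNat]
  rw [this]
  intro h
  rw [map_eq_zero] at h
  have : (RatFunc.X ^ 2 + 4 : RatFunc ℚ)
      = algebraMap (Polynomial ℚ) _ (Polynomial.X ^ 2 + 4) := by
    simp [map_add, map_pow, RatFunc.algebraMap_X, map_ofNat]
  rw [this] at h
  have h2 := RatFunc.algebraMap_injective ℚ (h.trans (map_zero _).symm)
  have := congrArg (Polynomial.eval 0) h2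
  simp at this

lemma W_ne_zero : Wv ≠ 0 := by
  have : Wv = algebraMap (Polynomial (RatFunc ℚ)) Kpr
      (16 * (Polynomial.C RatFunc.X ^ 2 + 4) * Polynomial.X ^ 3
        + 4 * (Polynomial.C RatFunc.X ^ 2 + 4) * Polynomial.X ^ 2
        - 4 * (19 * Polynomial.C RatFunc.X + 41) * Polynomial.X
        - 16 * Polynomial.C RatFunc.X - 199) := by
    simp [Wv, pv, rv, map_add, map_sub, map_mul, map_pow, map_ofNat,
      RatFunc.algebraMap_X, RatFunc.algebraMap_C]
  rw [this]
  apply RatFunc.algebraMap_ne_zero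
  intro h
  have h0 := congrArg (Polynomial.eval 0) h
  simp only [Polynomial.eval_sub, Polynomial.eval_add, Polynomial.eval_mul, Polynomial.eval_pow,
    Polynomial.eval_C, Polynomial.eval_X, Polynomial.eval_ofNat, Polynomial.eval_zero] at h0
  have h1 : algebraMap (Polynomial ℚ) (RatFunc ℚ) (-16 * Polynomial.X - 199) = 0 := by
    rw [map_sub, map_mul, map_neg, map_ofNat, map_ofNat, RatFunc.algebraMap_X]
    linear_combination h0
  have h2 := RatFunc.algebraMap_injective ℚ (h1.trans (map_zero _).symm)
  have h3 := congrArg (Polynomial.eval 0) h2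
  simp at h3

open Classical in
/-- The x-coordinate of `[2]Q₀`, where `Q₀ = (4r(p²+4)W, 2(p²+4)W²)`, equals
`16(p²+4)²r⁴ + 8(p²+4)(19p+41)r² + 4(32p³+398p²+128p+1592)r + 16p³+560p²+1622p+2477`. -/
theorem x_of_two_smul_Q0 :
    ∃ (h : Epr.Nonsingular (4 * rv * (pv ^ 2 + 4) * Wv) (2 * (pv ^ 2 + 4) * Wv ^ 2))
      (y : Kpr)
      (h2 : Epr.Nonsingular
        (16 * (pv ^ 2 + 4) ^ 2 * rv ^ 4 + 8 * (pv ^ 2 + 4) * (19 * pv + 41) * rv ^ 2 +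
          4 * (32 * pv ^ 3 + 398 * pv ^ 2 + 128 * pv + 1592) * rv +
          16 * pv ^ 3 + 560 * pv ^ 2 + 1622 * pv + 2477) y),
      (2 : ℤ) • (Point.some _ _ h : Epr.Point) = Point.some _ _ h2 := by
  set x₁ : Kpr := 4 * rv * (pv ^ 2 + 4) * Wv with hx₁
  set y₁ : Kpr := 2 * (pv ^ 2 + 4) * Wv ^ 2 with hy₁
  have hy0 : y₁ ≠ 0 := by
    simp only [hy₁, mul_ne_zero_iff]
    exact ⟨⟨by norm_num, p4_ne_zero⟩, pow_ne_zero _ W_ne_zero⟩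
  have hQ : Epr.Nonsingular x₁ y₁ := by
    rw [nonsingular_iff]
    constructor
    · rw [equation_iff]
      simp only [hx₁, hy₁, Epr, Wv]
      ring
    · right
      simp only [negY, Epr]
      intro h
      apply hy0
      have : (2:Kpr) * y₁ = 0 := by linear_combination h
      exact (mul_eq_zero.mp this).resolve_left (by norm_num)
  have hy : y₁ ≠ Epr.negY x₁ y₁ := by
    simp only [negY, Epr]
    intro h
    apply hy0
    have : (2:Kpr) * y₁ = 0 := by linear_combination h
    exact (mul_eq_zero.mp this).resolve_left (by norm_num)
  have hden : y₁ - Epr.negY x₁ y₁ = 2 * y₁ := by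
    simp only [negY, Epr]; ring
  have hslope : Epr.slope x₁ x₁ y₁ y₁ =
      (3 * x₁ ^ 2 + 2 * Epr.a₂ * x₁ + Epr.a₄) / (2 * y₁) := by
    rw [slope_of_Y_ne rfl hy, hden]
    simp only [Epr]; ring_nf
  have key : Epr.addX x₁ x₁ (Epr.slope x₁ x₁ y₁ y₁) =
      16 * (pv ^ 2 + 4) ^ 2 * rv ^ 4 + 8 * (pv ^ 2 + 4) * (19 * pv + 41) * rv ^ 2 +
        4 * (32 * pv ^ 3 + 398 * pv ^ 2 + 128 * pv + 1592) * rv +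
        16 * pv ^ 3 + 560 * pv ^ 2 + 1622 * pv + 2477 := by
    rw [addX, hslope]
    have h2y : (2:Kpr) * y₁ ≠ 0 := mul_ne_zero (by norm_num) hy0
    field_simp
    simp only [hx₁, hy₁, Epr, Wv]
    ring
  refine ⟨hQ, Epr.addY x₁ x₁ y₁ (Epr.slope x₁ x₁ y₁ y₁),
    key ▸ nonsingular_add hQ hQ (fun h => hy h.2), ?_⟩
  rw [two_zsmul, Point.add_self_of_Y_ne hy]
  simp only [← key]
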